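/- For every positive integer n, ∑_{k=1}^{n} (n/k) · C(k, n−k) = L(n), the n-th Lucas number, where the sum is taken in ℚ. Here L(1)=1, L(2)=3 and L(n)=L(n-1)+L(n-2). -/

import Mathlib

open Finset BigOperators

/-- The compositae: sum over compositions of `n` into `k` positive parts
of products of `a`-values. -/
def compositae (a : ℕ → ℤ) (n k : ℕ) : ℤ :=
  ∑ l ∈ (Finset.Nat.antidiagonalTuple k n).filter (fun l => ∀ i, 0 < l i),
    ∏ i, a (l i)

/-- Lucas numbers: L 0 = 2, L 1 = 1, L n = L (n-1) + L (n-2). -/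
def lucas : ℕ → ℤ
  | 0 => 2
  | 1 => 1
  | n + 2 => lucas (n + 1) + lucas n

lemma diag_sum (m : ℕ) :
    ∑ k ∈ Finset.range (m + 1), (k.choose (m - k)) = Nat.fib (m + 1) := by
  rw [Nat.fib_succ_eq_sum_choose, Finset.Nat.sum_antidiagonal_eq_sum_range_succ_mk]

lemma lucas_eq_fib (n : ℕ) : lucas (n + 1) = (Nat.fib (n + 2) : ℤ) + Nat.fib n := by
  induction n using Nat.twoStepInduction with
  | zero => simp [lucas]
  | one => show lucas 2 = _; norm_num [lucas, Nat.fib]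
  | more k ih1 ih2 =>
    show lucas (k + 2) + lucas (k + 1) = _
    rw [ih1, ih2]
    have h1 : Nat.fib (k + 4) = Nat.fib (k + 2) + Nat.fib (k + 3) := Nat.fib_add_two
    have h2 : Nat.fib (k + 2) = Nat.fib k + Nat.fib (k + 1) := Nat.fib_add_two
    push_cast [h1, h2]; ring

lemma term_nat (n k : ℕ) (h1 : 1 ≤ k) (h2 : k ≤ n) :
    n * k.choose (n - k)
      = k * k.choose (n - k) + k * (if k < n then (k-1).choose (n - 1 - k) else 0) := by
  rcases eq_or_lt_of_le h2 with rfl | hlt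
  · simp
  · rw [if_pos hlt]
    have hk : k - 1 + 1 = k := Nat.succ_pred_eq_of_pos h1
    have hnk : n - k - 1 + 1 = n - k := by omega
    have hmc := Nat.add_one_mul_choose_eq (k - 1) (n - k - 1)
    rw [hk, hnk] at hmc
    have hsub : n - 1 - k = n - k - 1 := by omega
    rw [hsub, hmc]
    nlinarith [Nat.sub_add_cancel h2]

lemma shifted_diag (m : ℕ) :
    ∑ i ∈ Finset.range (m + 1), ((i + 1).choose (m - i)) = Nat.fib (m + 2) := by
  have h := diag_sum (m + 1)
  rw [Finset.sum_range_succ' (fun k => k.choose (m + 1 - k)) (m + 1)] at h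
  simpa using h

theorem stmt_6 (n : ℕ) (hn : 0 < n) :
    ∑ k ∈ Finset.Icc 1 n, (n : ℚ) / k * (k.choose (n - k) : ℚ)
      = (lucas n : ℚ) := by
  obtain ⟨m, rfl⟩ : ∃ m, n = m + 1 := ⟨n - 1, by omega⟩
  have hterm : ∀ k ∈ Finset.Icc 1 (m + 1),
      ((m + 1 : ℕ) : ℚ) / k * (k.choose (m + 1 - k) : ℚ)
        = (k.choose (m + 1 - k) : ℚ)
          + (if k < m + 1 then ((k-1).choose (m - k) : ℚ) else 0) := by
    intro k hk
    simp only [Finset.mem_Icc] at hk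
    have hk0 : (k : ℚ) ≠ 0 := Nat.cast_ne_zero.mpr (by omega)
    have h := term_nat (m + 1) k hk.1 hk.2
    have hm : (m + 1 : ℕ) - 1 - k = m - k := by omega
    rw [hm] at h
    have hcast : ((m + 1 : ℕ) : ℚ) * (k.choose (m + 1 - k) : ℚ)
        = k * (k.choose (m + 1 - k) : ℚ)
          + k * (if k < m + 1 then ((k-1).choose (m - k) : ℚ) else 0) := by
      split_ifs with hlt
      · rw [if_pos hlt] at h; exact_mod_cast h
      · rw [if_neg hlt] at h; exact_mod_cast h
    field_simp
    push_cast at hcast ⊢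
    linear_combination hcast
  rw [Finset.sum_congr rfl hterm, Finset.sum_add_distrib]
  have hs1 : ∑ k ∈ Finset.Icc 1 (m + 1), (k.choose (m + 1 - k) : ℚ)
      = (Nat.fib (m + 2) : ℚ) := by
    rw [← Finset.Ico_add_one_right_eq_Icc, Finset.sum_Ico_eq_sum_range, ← shifted_diag m]
    push_cast
    apply Finset.sum_congr rfl (fun i _ => ?_)
    congr 2 <;> omega
  have hs2 : ∑ k ∈ Finset.Icc 1 (m + 1),
      (if k < m + 1 then ((k-1).choose (m - k) : ℚ) else 0) = (Nat.fib m : ℚ) := by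
    rcases Nat.eq_zero_or_pos m with rfl | hm
    · simp
    · obtain ⟨p, rfl⟩ : ∃ p, m = p + 1 := ⟨m - 1, by omega⟩
      rw [← Finset.Ico_add_one_right_eq_Icc, Finset.sum_Ico_succ_top (by omega), if_neg (by omega),
        add_zero, Finset.Ico_add_one_right_eq_Icc]
      have h1 : ∀ k ∈ Finset.Icc 1 (p + 1),
          (if k < p + 1 + 1 then ((k-1).choose (p + 1 - k) : ℚ) else 0)
            = ((k-1).choose (p + 1 - k) : ℚ) := by
        intro k hk; simp only [Finset.mem_Icc] at hk; rw [if_pos (by omega)]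
      rw [Finset.sum_congr rfl h1, ← Finset.Ico_add_one_right_eq_Icc, Finset.sum_Ico_eq_sum_range,
        ← diag_sum p]
      push_cast
      apply Finset.sum_congr rfl (fun i _ => ?_)
      congr 2 <;> omega
  rw [hs1, hs2, lucas_eq_fib]
  push_cast
  ring
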